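/- Let n ≥ 1 be an integer, a ∈ ℝ, b < 0 and τ < 0 with |b|·|τ|^{n+1} < (n+1)^n. Then there exist T < τ and a C² function ψ : (T,τ] → ℝ with ψ'(t) > 0 and ψ''(t) > 0 for all t ∈ (T,τ], satisfying (ψ'(t))^{n−1}·ψ''(t) = exp(ψ(t)+a) and (1/(n+1))·(ψ'(t))^{n+1} = exp(ψ(t)+a) + b on (T,τ], the matching condition ψ(τ) = ψ_cusp(τ), and the horn boundary conditions lim_{t→T⁺} ψ(t) = log|b| − a and lim_{t→T⁺} ψ'(t) = 0; moreover T satisfies ∫₀^{M} (e^s − 1)^{−1/(n+1)} ds = (n+1)^{1/(n+1)}·|b|^{1/(n+1)}·(τ − T), where M := −(n+1)·log|τ| − log|b| + n·log(n+1). -/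

import Mathlib

open MeasureTheory intervalIntegral Set Filter Real

namespace Statement6Aux

noncomputable def hFun (r M s : ℝ) : ℝ :=
  if s ≤ 0 then 1 else (Real.exp (min s M) - 1) ^ r

noncomputable def Fprim (r M u : ℝ) : ℝ := ∫ s in (0:ℝ)..u, hFun r M s

variable {r M : ℝ}

lemma hFun_pos (hM : 0 < M) (s : ℝ) : 0 < hFun r M s := by
  unfold hFun
  split_ifs with h
  · norm_num
  · push_neg at h
    have : 0 < min s M := lt_min h hM
    have : 1 < Real.exp (min s M) := by
      rw [← Real.exp_zero]; exact Real.exp_lt_exp.2 this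
    exact Real.rpow_pos_of_pos (by linarith) r

lemma hFun_eq_of_pos {s : ℝ} (hs : 0 < s) (hsM : s ≤ M) :
    hFun r M s = (Real.exp s - 1) ^ r := by
  unfold hFun
  rw [if_neg (not_le.2 hs), min_eq_left hsM]

lemma hFun_measurable (hM : 0 < M) : Measurable (hFun r M) := by
  have heq : hFun r M = fun s =>
      if s ≤ 0 then 1 else Real.exp (Real.log (Real.exp (min s M) - 1) * r) := by
    funext s
    unfold hFun
    split_ifs with h
    · rfl
    · push_neg at h
      rw [Real.rpow_def_of_pos]
      have h1 : 0 < min s M := lt_min h hM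
      have : 1 < Real.exp (min s M) := by
        rw [← Real.exp_zero]; exact Real.exp_lt_exp.2 h1
      linarith
  rw [heq]
  exact Measurable.ite measurableSet_Iic measurable_const
    (((Real.measurable_log.comp ((Real.measurable_exp.comp
      (measurable_id.min measurable_const)).sub measurable_const)).mul
      measurable_const).exp)

lemma hFun_continuousAt (hM : 0 < M) {s : ℝ} (hs : 0 < s) :
    ContinuousAt (hFun r M) s := by
  have hbase : ContinuousAt (fun x : ℝ => Real.exp (min x M) - 1) s :=
    ((Real.continuous_exp.comp (continuous_id.min continuous_const)).sub
      continuous_const).continuousAt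
  have hne : Real.exp (min s M) - 1 ≠ 0 := by
    have : 0 < min s M := lt_min hs hM
    have : 1 < Real.exp (min s M) := by
      rw [← Real.exp_zero]; exact Real.exp_lt_exp.2 this
    linarith
  have : ContinuousAt (fun x : ℝ => (Real.exp (min x M) - 1) ^ r) s :=
    hbase.rpow_const (Or.inl hne)
  apply this.congr
  filter_upwards [eventually_gt_nhds hs] with x hx
  unfold hFun
  rw [if_neg (not_le.2 hx)]

lemma hFun_intervalIntegrable (hr : -1 < r) (hr0 : r < 0) (hM : 0 < M) (a b : ℝ) :
    IntervalIntegrable (hFun r M) volume a b := by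
  have key : ∀ b : ℝ, IntervalIntegrable (hFun r M) volume 0 b := by
    intro b
    rcases le_or_gt b 0 with hb | hb
    · rw [intervalIntegrable_iff]
      have hconst : IntegrableOn (fun _ : ℝ => (1:ℝ)) (Set.uIoc 0 b) volume := by
        rw [Set.uIoc_of_ge hb]
        exact integrableOn_const measure_Ioc_lt_top.ne
      refine hconst.congr_fun (fun s hs => ?_) measurableSet_uIoc
      rw [Set.uIoc_of_ge hb] at hs
      unfold hFun
      rw [if_pos hs.2]
    · rw [intervalIntegrable_iff, Set.uIoc_of_le hb.le]
      have hg : IntegrableOn (fun s : ℝ => s ^ r + M ^ r) (Ioc 0 b) := by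
        apply Integrable.add
        · have := intervalIntegrable_rpow' (a := 0) (b := b) hr
          rwa [intervalIntegrable_iff, Set.uIoc_of_le hb.le] at this
        · exact integrableOn_const measure_Ioc_lt_top.ne
      apply Integrable.mono' hg
        ((hFun_measurable hM).aestronglyMeasurable.restrict)
      · filter_upwards [ae_restrict_mem measurableSet_Ioc] with s hs
        have hs0 : 0 < s := hs.1
        have hmin : 0 < min s M := lt_min hs0 hM
        have h1 : hFun r M s = (Real.exp (min s M) - 1) ^ r := by
          unfold hFun; rw [if_neg (not_le.2 hs0)]
        have h2 : min s M ≤ Real.exp (min s M) - 1 := by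
          have := Real.add_one_le_exp (min s M); linarith
        have h3 : (Real.exp (min s M) - 1) ^ r ≤ (min s M) ^ r :=
          Real.rpow_le_rpow_of_nonpos hmin h2 hr0.le
        have h4 : (min s M) ^ r ≤ s ^ r + M ^ r := by
          rcases min_cases s M with ⟨h, _⟩ | ⟨h, _⟩ <;> rw [h]
          · have : (0:ℝ) ≤ M ^ r := (Real.rpow_pos_of_pos hM r).le
            linarith
          · have : (0:ℝ) ≤ s ^ r := (Real.rpow_pos_of_pos hs0 r).le
            linarith
        rw [Real.norm_eq_abs, abs_of_pos (hFun_pos hM s), h1]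
        linarith
  exact (key a).symm.trans (key b)

lemma Fprim_continuous (hr : -1 < r) (hr0 : r < 0) (hM : 0 < M) :
    Continuous (Fprim r M) :=
  intervalIntegral.continuous_primitive
    (fun a b => hFun_intervalIntegrable hr hr0 hM a b) 0

lemma Fprim_strictMono (hr : -1 < r) (hr0 : r < 0) (hM : 0 < M) :
    StrictMono (Fprim r M) := by
  intro x y hxy
  have h1 : Fprim r M y = Fprim r M x + ∫ s in x..y, hFun r M s :=
    (integral_add_adjacent_intervals (hFun_intervalIntegrable hr hr0 hM 0 x)
      (hFun_intervalIntegrable hr hr0 hM x y)).symm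
  have h2 : 0 < ∫ s in x..y, hFun r M s :=
    intervalIntegral.intervalIntegral_pos_of_pos_on
      (hFun_intervalIntegrable hr hr0 hM x y)
      (fun s _ => hFun_pos hM s) hxy
  linarith

lemma Fprim_zero : Fprim r M 0 = 0 := intervalIntegral.integral_same

lemma Fprim_of_nonpos {u : ℝ} (hu : u ≤ 0) : Fprim r M u = u := by
  unfold Fprim
  rw [intervalIntegral.integral_congr (g := fun _ => (1:ℝ))
    (fun s hs => by
      rw [Set.uIcc_of_ge hu] at hs
      unfold hFun; rw [if_pos hs.2]),
    intervalIntegral.integral_const]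
  simp

lemma Fprim_of_ge (hr : -1 < r) (hr0 : r < 0) (hM : 0 < M) {u : ℝ} (hu : M ≤ u) :
    Fprim r M u = Fprim r M M + (u - M) * (Real.exp M - 1) ^ r := by
  have h1 : Fprim r M u = Fprim r M M + ∫ s in M..u, hFun r M s :=
    (integral_add_adjacent_intervals (hFun_intervalIntegrable hr hr0 hM 0 M)
      (hFun_intervalIntegrable hr hr0 hM M u)).symm
  rw [h1, intervalIntegral.integral_congr (g := fun _ => (Real.exp M - 1) ^ r)
    (fun s hs => by
      rw [Set.uIcc_of_le hu] at hs
      have hsM : M ≤ s := hs.1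
      unfold hFun
      rw [if_neg (not_le.2 (lt_of_lt_of_le hM hsM)), min_eq_right hsM]),
    intervalIntegral.integral_const, smul_eq_mul]

lemma Fprim_surjective (hr : -1 < r) (hr0 : r < 0) (hM : 0 < M) :
    Function.Surjective (Fprim r M) := by
  apply (Fprim_continuous hr hr0 hM).surjective
  · have hκ : 0 < (Real.exp M - 1) ^ r := by
      apply Real.rpow_pos_of_pos
      have : 1 < Real.exp M := by rw [← Real.exp_zero]; exact Real.exp_lt_exp.2 hM
      linarith
    apply Tendsto.congr' (f₁ := fun u => Fprim r M M + (u - M) * (Real.exp M - 1) ^ r)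
    · filter_upwards [eventually_ge_atTop M] with u hu
      exact (Fprim_of_ge hr hr0 hM hu).symm
    · apply tendsto_atTop_add_const_left
      exact Tendsto.atTop_mul_const hκ (tendsto_atTop_add_const_right _ (-M) tendsto_id)
  · apply Tendsto.congr' (f₁ := fun u : ℝ => u)
    · filter_upwards [eventually_le_atBot (0:ℝ)] with u hu
      exact (Fprim_of_nonpos hu).symm
    · exact tendsto_id

lemma Fprim_hasDerivAt (hr : -1 < r) (hr0 : r < 0) (hM : 0 < M) {x : ℝ} (hx : 0 < x) :
    HasDerivAt (Fprim r M) (hFun r M x) x :=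
  intervalIntegral.integral_hasDerivAt_right
    (hFun_intervalIntegrable hr hr0 hM 0 x)
    ((hFun_measurable hM).stronglyMeasurable.stronglyMeasurableAtFilter)
    (hFun_continuousAt hM hx)

end Statement6Aux

open MeasureTheory intervalIntegral Set Filter Real Statement6Aux

set_option maxHeartbeats 1000000


/-- The model cuspidal Kähler–Einstein potential
`ψ_cusp(t) = −(n+1)·log(−t) + n·log(n+1) − a`, defined for `t < 0`. -/
noncomputable def psiCusp (n : ℕ) (a : ℝ) (t : ℝ) : ℝ :=
  -((n : ℝ) + 1) * Real.log (-t) + (n : ℝ) * Real.log ((n : ℝ) + 1) - a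

/-- A *horn solution* with data `(n, a, b, T, τ)`: a `C²` function `ψ` on `(T,τ]`
(recorded via its first and second derivative functions `ψ'`, `ψ''`) with
`ψ' > 0`, `ψ'' > 0`, satisfying the Kähler–Einstein ODE
`(ψ')^(n−1)·ψ'' = exp(ψ+a)` on `(T,τ]`, the matching condition `ψ(τ) = ψ_cusp(τ)`,
and the horn boundary condition `lim_{t→T⁺} ψ(t) = log|b| − a`. -/
structure IsHornSolution (n : ℕ) (a b T τ : ℝ) (ψ ψ' ψ'' : ℝ → ℝ) : Prop where
  deriv1 : ∀ t ∈ Set.Ioc T τ, HasDerivWithinAt ψ (ψ' t) (Set.Ioc T τ) t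
  deriv2 : ∀ t ∈ Set.Ioc T τ, HasDerivWithinAt ψ' (ψ'' t) (Set.Ioc T τ) t
  cont2 : ContinuousOn ψ'' (Set.Ioc T τ)
  pos1 : ∀ t ∈ Set.Ioc T τ, 0 < ψ' t
  pos2 : ∀ t ∈ Set.Ioc T τ, 0 < ψ'' t
  ode : ∀ t ∈ Set.Ioc T τ, (ψ' t) ^ (n - 1) * ψ'' t = Real.exp (ψ t + a)
  matching : ψ τ = psiCusp n a τ
  horn : Filter.Tendsto ψ (nhdsWithin T (Set.Ioc T τ)) (nhds (Real.log |b| - a))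

/-- Existence of the horn solution: for `b < 0`, `τ < 0` with
`|b|·|τ|^(n+1) < (n+1)^n` there exist `T < τ` and a horn solution `ψ` on `(T,τ]`
which moreover satisfies the first-integral form with constant `b`, whose derivative
tends to `0` at the horn `t → T⁺`, and where `T` is determined by the integral relation
`∫₀^M (e^s−1)^(−1/(n+1)) ds = (n+1)^(1/(n+1))·|b|^(1/(n+1))·(τ−T)` with
`M = −(n+1)·log|τ| − log|b| + n·log(n+1)`. -/
theorem statement6 (n : ℕ) (hn : 1 ≤ n) (a b τ : ℝ) (hb : b < 0) (hτ : τ < 0)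
    (hbτ : |b| * |τ| ^ (n + 1) < ((n : ℝ) + 1) ^ n) :
    ∃ T : ℝ, T < τ ∧ ∃ ψ ψ' ψ'' : ℝ → ℝ,
      IsHornSolution n a b T τ ψ ψ' ψ'' ∧
      (∀ t ∈ Set.Ioc T τ,
        (1 / ((n : ℝ) + 1)) * (ψ' t) ^ (n + 1) = Real.exp (ψ t + a) + b) ∧
      Filter.Tendsto ψ' (nhdsWithin T (Set.Ioc T τ)) (nhds 0) ∧
      (∫ s in (0 : ℝ)..(-((n : ℝ) + 1) * Real.log |τ| - Real.log |b| +
            (n : ℝ) * Real.log ((n : ℝ) + 1)),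
          (Real.exp s - 1) ^ (-(1 : ℝ) / ((n : ℝ) + 1))) =
        ((n : ℝ) + 1) ^ ((1 : ℝ) / ((n : ℝ) + 1)) * |b| ^ ((1 : ℝ) / ((n : ℝ) + 1)) *
          (τ - T) := by
  -- basic constants
  set N : ℝ := (n : ℝ) + 1 with hNdef
  have hN : 0 < N := by positivity
  have hN1 : 1 < N := by
    have : (1:ℝ) ≤ (n:ℝ) := by exact_mod_cast hn
    simp only [hNdef]; linarith
  set p : ℝ := 1 / N with hpdef
  have hp : 0 < p := by positivity
  have hp1 : p < 1 := by
    rw [hpdef, div_lt_one hN]; exact hN1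
  set r : ℝ := -p with hrdef
  have hr : -1 < r := by rw [hrdef]; linarith
  have hr0 : r < 0 := by rw [hrdef]; linarith
  have hbabs : 0 < |b| := abs_pos.2 (ne_of_lt hb)
  have hτabs : 0 < |τ| := abs_pos.2 (ne_of_lt hτ)
  set M : ℝ := -N * Real.log |τ| - Real.log |b| + (n : ℝ) * Real.log N with hMdef
  have hM : 0 < M := by
    have h1 : 0 < |b| * |τ| ^ (n + 1) := by positivity
    have h2 := Real.log_lt_log h1 hbτ
    rw [Real.log_mul (ne_of_gt hbabs) (by positivity), Real.log_pow, Real.log_pow] at h2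
    push_cast at h2
    simp only [hMdef, hNdef]
    linarith
  set c : ℝ := (N * |b|) ^ p with hcdef
  have hc : 0 < c := Real.rpow_pos_of_pos (by positivity) p
  set F : ℝ → ℝ := Fprim r M with hFdef
  have hFmono : StrictMono F := Fprim_strictMono hr hr0 hM
  have hFsurj : Function.Surjective F := Fprim_surjective hr hr0 hM
  have hF0 : F 0 = 0 := Fprim_zero
  have hFM : 0 < F M := by rw [← hF0]; exact hFmono hM
  set T : ℝ := τ - F M / c with hTdef
  have hTτ : T < τ := by
    rw [hTdef]
    have : 0 < F M / c := div_pos hFM hc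
    linarith
  -- the inverse of F
  set Φ : ℝ ≃o ℝ := StrictMono.orderIsoOfSurjective F hFmono hFsurj with hΦdef
  set u : ℝ → ℝ := fun v => Φ.symm v with hudef
  have hFu : ∀ v, F (u v) = v := fun v =>
    StrictMono.orderIsoOfSurjective_self_symm_apply F hFmono hFsurj v
  have huF : ∀ x, u (F x) = x := fun x =>
    StrictMono.orderIsoOfSurjective_symm_apply_self F hFmono hFsurj x
  have hu0 : u 0 = 0 := by have := huF 0; rwa [hF0] at this
  have hucont : Continuous u := (Φ.symm : ℝ ≃o ℝ).continuous
  have humono : StrictMono u := fun x y hxy => by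
    have := (Φ.symm : ℝ ≃o ℝ).strictMono hxy; exact this
  -- derivative of u where u v > 0
  have hu_deriv : ∀ v : ℝ, 0 < u v → HasDerivAt u (hFun r M (u v))⁻¹ v := by
    intro v hv
    exact HasDerivAt.of_local_left_inverse (hucont.continuousAt)
      (Fprim_hasDerivAt hr hr0 hM hv) (ne_of_gt (hFun_pos hM (u v)))
      (Filter.Eventually.of_forall hFu)
  -- the solution
  set U : ℝ → ℝ := fun t => u (c * (t - T)) with hUdef
  have hUcont : Continuous U := hucont.comp (by continuity)
  have hUT : U T = 0 := by simp [hUdef, hu0]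
  have hUτ : U τ = M := by
    have : c * (τ - T) = F M := by
      rw [hTdef]; field_simp; ring
    rw [hUdef]; simp only [this, huF]
  have hU_pos : ∀ t ∈ Set.Ioc T τ, 0 < U t := by
    intro t ht
    rw [← hUT]
    have : c * (T - T) < c * (t - T) :=
      mul_lt_mul_of_pos_left (by linarith [ht.1]) hc
    exact humono this
  have hU_le : ∀ t ∈ Set.Ioc T τ, U t ≤ M := by
    intro t ht
    rw [← hUτ]
    exact (humono.le_iff_le).2
      (mul_le_mul_of_nonneg_left (by linarith [ht.2]) hc.le)
  have hX_pos : ∀ t ∈ Set.Ioc T τ, 0 < Real.exp (U t) - 1 := by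
    intro t ht
    have := hU_pos t ht
    have : 1 < Real.exp (U t) := by rw [← Real.exp_zero]; exact Real.exp_lt_exp.2 this
    linarith
  set ψ : ℝ → ℝ := fun t => Real.log |b| - a + U t with hψdef
  set ψ' : ℝ → ℝ := fun t => c * (Real.exp (U t) - 1) ^ p with hψ'def
  set ψ'' : ℝ → ℝ := fun t =>
    c ^ 2 * p * Real.exp (U t) * (Real.exp (U t) - 1) ^ (2 * p - 1) with hψ''def
  -- derivative of U on the interval
  have hU_deriv : ∀ t ∈ Set.Ioc T τ, HasDerivAt U (c * (Real.exp (U t) - 1) ^ p) t := by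
    intro t ht
    have h1 : HasDerivAt (fun s : ℝ => c * (s - T)) c t := by
      simpa using ((hasDerivAt_id t).sub_const T).const_mul c
    have h2 : HasDerivAt u (hFun r M (U t))⁻¹ (c * (t - T)) :=
      hu_deriv _ (hU_pos t ht)
    have h3 := h2.comp t h1
    have h4 : (hFun r M (U t))⁻¹ = (Real.exp (U t) - 1) ^ p := by
      rw [hFun_eq_of_pos (hU_pos t ht) (hU_le t ht), hrdef,
        Real.rpow_neg (le_of_lt (hX_pos t ht)), inv_inv]
    rw [h4] at h3
    have : (fun s => u (c * (s - T))) = U := rfl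
    rw [mul_comm] at h3
    exact h3
  have hψ_deriv : ∀ t ∈ Set.Ioc T τ, HasDerivAt ψ (ψ' t) t := by
    intro t ht
    simpa [hψdef] using (hU_deriv t ht).const_add (Real.log |b| - a)
  have hψ'_deriv : ∀ t ∈ Set.Ioc T τ, HasDerivAt ψ' (ψ'' t) t := by
    intro t ht
    have hX := hX_pos t ht
    have hg : HasDerivAt (fun s => Real.exp (U s) - 1)
        (Real.exp (U t) * (c * (Real.exp (U t) - 1) ^ p)) t :=
      ((Real.hasDerivAt_exp (U t)).comp t (hU_deriv t ht)).sub_const 1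
    have houter : HasDerivAt (fun x : ℝ => x ^ p)
        (p * (Real.exp (U t) - 1) ^ (p - 1)) (Real.exp (U t) - 1) :=
      Real.hasDerivAt_rpow_const (Or.inl (ne_of_gt hX))
    have h3 := (houter.comp t hg).const_mul c
    have heq : c * (p * (Real.exp (U t) - 1) ^ (p - 1) *
        (Real.exp (U t) * (c * (Real.exp (U t) - 1) ^ p))) = ψ'' t := by
      show _ = c ^ 2 * p * Real.exp (U t) * (Real.exp (U t) - 1) ^ (2 * p - 1)
      have h6 : (Real.exp (U t) - 1) ^ (p - 1) * (Real.exp (U t) - 1) ^ p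
          = (Real.exp (U t) - 1) ^ (2 * p - 1) := by
        rw [← Real.rpow_add hX]; ring_nf
      rw [← h6]; ring
    rw [heq] at h3
    exact h3
  -- exp (ψ t + a)
  have hexp : ∀ t : ℝ, Real.exp (ψ t + a) = |b| * Real.exp (U t) := by
    intro t
    rw [hψdef]
    simp only []
    rw [show Real.log |b| - a + U t + a = Real.log |b| + U t by ring,
      Real.exp_add, Real.exp_log hbabs]
  -- powers of c and X
  have hcpow : c ^ (n + 1) = N * |b| := by
    rw [hcdef, ← Real.rpow_natCast ((N * |b|) ^ p) (n+1), ← Real.rpow_mul (by positivity)]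
    have : p * ((n:ℝ) + 1) = 1 := by
      rw [hpdef]; field_simp [hNdef]; exact hNdef.symm
    push_cast
    rw [this, Real.rpow_one]
  have hXpow : ∀ t ∈ Set.Ioc T τ,
      ((Real.exp (U t) - 1) ^ p) ^ (n + 1) = Real.exp (U t) - 1 := by
    intro t ht
    have hX := hX_pos t ht
    rw [← Real.rpow_natCast ((Real.exp (U t) - 1) ^ p) (n+1),
      ← Real.rpow_mul hX.le]
    have : p * ((n:ℝ) + 1) = 1 := by rw [hpdef]; field_simp [hNdef]; exact hNdef.symm
    push_cast
    rw [this, Real.rpow_one]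
  refine ⟨T, hTτ, ψ, ψ', ψ'', ⟨?_, ?_, ?_, ?_, ?_, ?_, ?_, ?_⟩, ?_, ?_, ?_⟩
  · exact fun t ht => (hψ_deriv t ht).hasDerivWithinAt
  · exact fun t ht => (hψ'_deriv t ht).hasDerivWithinAt
  · -- continuity of ψ''
    intro t ht
    have hX := hX_pos t ht
    have : ContinuousAt ψ'' t := by
      apply ContinuousAt.mul
      · exact (continuousAt_const.mul (Real.continuous_exp.comp hUcont).continuousAt)
      · exact (((Real.continuous_exp.comp hUcont).continuousAt).sub
          continuousAt_const).rpow_const (Or.inl (ne_of_gt hX))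
    exact this.continuousWithinAt
  · -- positivity of ψ'
    intro t ht
    exact mul_pos hc (Real.rpow_pos_of_pos (hX_pos t ht) p)
  · -- positivity of ψ''
    intro t ht
    have := hX_pos t ht
    have := Real.rpow_pos_of_pos this (2*p-1)
    positivity
  · -- the ODE
    intro t ht
    have hX := hX_pos t ht
    rw [hexp t, hψ'def, hψ''def]
    simp only []
    rw [mul_pow]
    have hcast : ((n - 1 : ℕ) : ℝ) = (n : ℝ) - 1 := by
      have : (1:ℕ) ≤ n := hn
      push_cast [Nat.cast_sub this]
      ring
    have hXpows : ((Real.exp (U t) - 1) ^ p) ^ (n - 1) *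
        (Real.exp (U t) - 1) ^ (2 * p - 1) = 1 := by
      rw [← Real.rpow_natCast ((Real.exp (U t) - 1) ^ p) (n-1),
        ← Real.rpow_mul hX.le, ← Real.rpow_add hX, hcast]
      have : p * ((n:ℝ) - 1) + (2 * p - 1) = 0 := by
        rw [hpdef]; field_simp [hNdef]; ring
      rw [this, Real.rpow_zero]
    have hcpow' : (c : ℝ) ^ (n - 1) * c ^ 2 = N * |b| := by
      rw [← pow_add, show n - 1 + 2 = n + 1 by omega, hcpow]
    have hNp : N * p = 1 := by rw [hpdef]; field_simp
    calc c ^ (n-1) * ((Real.exp (U t) - 1) ^ p) ^ (n - 1) *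
          (c ^ 2 * p * Real.exp (U t) * (Real.exp (U t) - 1) ^ (2*p-1))
        = (c ^ (n-1) * c ^ 2) * (((Real.exp (U t) - 1) ^ p) ^ (n - 1) *
          (Real.exp (U t) - 1) ^ (2*p-1)) * (p * Real.exp (U t)) := by ring
      _ = (N * |b|) * 1 * (p * Real.exp (U t)) := by rw [hcpow', hXpows]
      _ = (N * p) * (|b| * Real.exp (U t)) := by ring
      _ = |b| * Real.exp (U t) := by rw [hNp]; ring
  · -- matching
    rw [hψdef]
    simp only []
    rw [hUτ, psiCusp, hMdef]
    rw [abs_of_neg hτ]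
    push_cast [hNdef]
    ring
  · -- horn limit of ψ
    have : Filter.Tendsto ψ (nhds T) (nhds (ψ T)) :=
      ((continuous_const.add hUcont).tendsto T)
    have hψT : ψ T = Real.log |b| - a := by rw [hψdef]; simp [hUT]
    rw [hψT] at this
    exact this.mono_left nhdsWithin_le_nhds
  · -- first integral
    intro t ht
    rw [hexp t, hψ'def]
    simp only []
    rw [mul_pow, hcpow, hXpow t ht]
    have h5 : (1/N) * (N * |b| * (Real.exp (U t) - 1)) = |b| * (Real.exp (U t) - 1) := by
      field_simp
    rw [h5, abs_of_neg hb]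
    ring
  · -- limit of ψ'
    have h1 : Filter.Tendsto (fun t => Real.exp (U t) - 1) (nhds T) (nhds 0) := by
      have hcn : Continuous (fun t => Real.exp (U t) - 1) :=
        (Real.continuous_exp.comp hUcont).sub (continuous_const (y := (1:ℝ)))
      have := hcn.tendsto T
      simpa [hUT] using this
    have h2 : ContinuousAt (fun x : ℝ => x ^ p) 0 :=
      Real.continuousAt_rpow_const 0 p (Or.inr hp.le)
    have h3 : Filter.Tendsto (fun t => (Real.exp (U t) - 1) ^ p) (nhds T)
        (nhds ((0:ℝ) ^ p)) := (h2.tendsto.comp h1)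
    rw [Real.zero_rpow (ne_of_gt hp)] at h3
    have h4 : Filter.Tendsto ψ' (nhds T) (nhds 0) := by
      have := h3.const_mul c
      simpa [hψ'def] using this
    exact h4.mono_left nhdsWithin_le_nhds
  · -- integral relation
    have hLHS : (∫ s in (0:ℝ)..(-((n : ℝ) + 1) * Real.log |τ| - Real.log |b| +
        (n : ℝ) * Real.log ((n : ℝ) + 1)),
        (Real.exp s - 1) ^ (-(1 : ℝ) / ((n : ℝ) + 1))) = F M := by
      have hMeq : -((n : ℝ) + 1) * Real.log |τ| - Real.log |b| +
          (n : ℝ) * Real.log ((n : ℝ) + 1) = M := by rw [hMdef, hNdef]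
      have hrq : -(1:ℝ) / ((n:ℝ) + 1) = r := by
        rw [hrdef, hpdef, hNdef]; ring
      rw [hMeq, hrq, hFdef]
      unfold Fprim
      apply intervalIntegral.integral_congr_ae
      filter_upwards with s hs
      rw [Set.uIoc_of_le hM.le] at hs
      rw [hFun_eq_of_pos hs.1 hs.2]
    rw [hLHS]
    have hmul : ((n:ℝ) + 1) ^ ((1:ℝ) / ((n:ℝ) + 1)) * |b| ^ ((1:ℝ) / ((n:ℝ) + 1)) = c := by
      rw [hcdef, hpdef, hNdef, ← Real.mul_rpow (by positivity) hbabs.le]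
    rw [hmul, hTdef]
    field_simp
    ring
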